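/- Define I : [0,1] → ℝ by I(t) = t log t + (1−t) log(1−t) + log(M+1) − (1−t) log M for t ∈ [0,1/2] and I(t) = t log t + (1−t) log(1−t) + log(M+1) − t log M for t ∈ (1/2,1] (with the convention 0 log 0 = 0). Then I is continuous on [0,1], I(t) ≥ 0 for all t, I(t) = 0 if and only if t = 1/(M+1) or t = M/(M+1), and I is not differentiable at t = 1/2. -/

import Mathlib

open Real

/-- The level-1 rate function `I` for the right-bracket frequency observable on the
Dyck shift over `2M` symbols (using Lean's convention `Real.log 0 = 0`, which gives
`0 log 0 = 0`). -/
noncomputable def dyckLevel1Rate (M : ℕ) (t : ℝ) : ℝ :=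
  t * Real.log t + (1 - t) * Real.log (1 - t) + Real.log (M + 1) -
    (if t ≤ 1 / 2 then (1 - t) * Real.log M else t * Real.log M)

private lemma gibbs_le {p t : ℝ} (hp0 : 0 < p) (hp1 : p < 1) (ht0 : 0 < t) (ht1 : t < 1) :
    t * Real.log p + (1 - t) * Real.log (1 - p) ≤
      t * Real.log t + (1 - t) * Real.log (1 - t) := by
  have h1 : Real.log (p / t) ≤ p / t - 1 := Real.log_le_sub_one_of_pos (by positivity)
  have h2 : Real.log ((1 - p) / (1 - t)) ≤ (1 - p) / (1 - t) - 1 :=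
    Real.log_le_sub_one_of_pos (by apply div_pos <;> linarith)
  have e1 : Real.log (p / t) = Real.log p - Real.log t := Real.log_div hp0.ne' ht0.ne'
  have e2 : Real.log ((1 - p) / (1 - t)) = Real.log (1 - p) - Real.log (1 - t) :=
    Real.log_div (by linarith) (by linarith)
  have h1' : t * (Real.log p - Real.log t) ≤ p - t := by
    have := mul_le_mul_of_nonneg_left h1 ht0.le
    rw [e1] at this
    calc t * (Real.log p - Real.log t) ≤ t * (p / t - 1) := this
      _ = p - t := by field_simp
  have h2' : (1 - t) * (Real.log (1 - p) - Real.log (1 - t)) ≤ t - p := by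
    have := mul_le_mul_of_nonneg_left h2 (by linarith : (0:ℝ) ≤ 1 - t)
    rw [e2] at this
    calc (1 - t) * (Real.log (1 - p) - Real.log (1 - t)) ≤ (1 - t) * ((1 - p) / (1 - t) - 1) :=
          this
      _ = t - p := by
          have h1t : (1:ℝ) - t ≠ 0 := by linarith
          field_simp; ring
  nlinarith [h1', h2']

private lemma gibbs_lt {p t : ℝ} (hp0 : 0 < p) (hp1 : p < 1) (ht0 : 0 < t) (ht1 : t < 1)
    (hne : t ≠ p) :
    t * Real.log p + (1 - t) * Real.log (1 - p) <
      t * Real.log t + (1 - t) * Real.log (1 - t) := by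
  have h1 : Real.log (p / t) < p / t - 1 :=
    Real.log_lt_sub_one_of_pos (by positivity) (by
      intro h
      exact hne (by field_simp at h; linarith))
  have h2 : Real.log ((1 - p) / (1 - t)) ≤ (1 - p) / (1 - t) - 1 :=
    Real.log_le_sub_one_of_pos (by apply div_pos <;> linarith)
  have e1 : Real.log (p / t) = Real.log p - Real.log t := Real.log_div hp0.ne' ht0.ne'
  have e2 : Real.log ((1 - p) / (1 - t)) = Real.log (1 - p) - Real.log (1 - t) :=
    Real.log_div (by linarith) (by linarith)
  have h1' : t * (Real.log p - Real.log t) < p - t := by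
    have := mul_lt_mul_of_pos_left h1 ht0
    rw [e1] at this
    calc t * (Real.log p - Real.log t) < t * (p / t - 1) := this
      _ = p - t := by field_simp
  have h2' : (1 - t) * (Real.log (1 - p) - Real.log (1 - t)) ≤ t - p := by
    have := mul_le_mul_of_nonneg_left h2 (by linarith : (0:ℝ) ≤ 1 - t)
    rw [e2] at this
    calc (1 - t) * (Real.log (1 - p) - Real.log (1 - t)) ≤ (1 - t) * ((1 - p) / (1 - t) - 1) :=
          this
      _ = t - p := by
          have h1t : (1:ℝ) - t ≠ 0 := by linarith
          field_simp; ring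
  nlinarith [h1', h2']

private lemma rate_eq (M : ℕ) : dyckLevel1Rate M = fun t =>
    t * Real.log t + (1 - t) * Real.log (1 - t) + Real.log (M + 1) -
      max t (1 - t) * Real.log M := by
  funext t
  unfold dyckLevel1Rate
  rcases le_or_gt t (1 / 2) with h | h
  · rw [if_pos h, max_eq_right (by linarith)]
  · rw [if_neg (not_le.mpr h), max_eq_left (by linarith)]

/-- `I` is continuous on `[0,1]`, nonnegative there, vanishes exactly at
`t = 1/(M+1)` and `t = M/(M+1)`, and is not differentiable at `t = 1/2`. -/
theorem stmt5 (M : ℕ) (hM : 2 ≤ M) :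
    ContinuousOn (dyckLevel1Rate M) (Set.Icc 0 1) ∧
    (∀ t ∈ Set.Icc (0 : ℝ) 1, 0 ≤ dyckLevel1Rate M t) ∧
    (∀ t ∈ Set.Icc (0 : ℝ) 1,
      (dyckLevel1Rate M t = 0 ↔ t = 1 / (M + 1) ∨ t = M / (M + 1))) ∧
    ¬ DifferentiableAt ℝ (dyckLevel1Rate M) (1 / 2) := by
  have hm : (2 : ℝ) ≤ (M : ℝ) := by exact_mod_cast hM
  set m : ℝ := (M : ℝ) with hmdef
  have hm0 : 0 < m := by linarith
  have hm1 : 1 < m := by linarith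
  have hlogm : 0 < Real.log m := Real.log_pos hm1
  have hm1pos : (0 : ℝ) < m + 1 := by linarith
  -- p and q
  set p : ℝ := 1 / (m + 1) with hpdef
  set q : ℝ := m / (m + 1) with hqdef
  have hp0 : 0 < p := by positivity
  have hphalf : p < 1 / 2 := by
    rw [hpdef, div_lt_div_iff₀ hm1pos (by norm_num)]; linarith
  have hp1 : p < 1 := by linarith
  have hqhalf : 1 / 2 < q := by
    rw [hqdef, div_lt_div_iff₀ (by norm_num) hm1pos]; linarith
  have hq1 : q < 1 := by
    rw [hqdef, div_lt_one hm1pos]; linarith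
  have hq0 : 0 < q := by positivity
  have hpq : 1 - p = q := by rw [hpdef, hqdef]; field_simp; ring
  have hqp : 1 - q = p := by rw [hpdef, hqdef]; field_simp; ring
  have hlogp : Real.log p = -Real.log (m + 1) := by
    rw [hpdef, one_div, Real.log_inv]
  have hlogq : Real.log q = Real.log m - Real.log (m + 1) := by
    rw [hqdef, Real.log_div hm0.ne' hm1pos.ne']
  -- key formulas for the rate function on the two branches
  have hI_le : ∀ t : ℝ, t ≤ 1 / 2 → dyckLevel1Rate M t =
      (t * Real.log t + (1 - t) * Real.log (1 - t)) -
        (t * Real.log p + (1 - t) * Real.log (1 - p)) := by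
    intro t ht
    unfold dyckLevel1Rate
    rw [if_pos ht, hpq, hlogp, hlogq, ← hmdef]
    ring
  have hI_gt : ∀ t : ℝ, ¬ t ≤ 1 / 2 → dyckLevel1Rate M t =
      (t * Real.log t + (1 - t) * Real.log (1 - t)) -
        (t * Real.log q + (1 - t) * Real.log (1 - q)) := by
    intro t ht
    unfold dyckLevel1Rate
    rw [if_neg ht, hqp, hlogp, hlogq, ← hmdef]
    ring
  have hlog_lt : Real.log m < Real.log (m + 1) := Real.log_lt_log hm0 (by linarith)
  -- boundary values
  have hI0 : dyckLevel1Rate M 0 = Real.log (m + 1) - Real.log m := by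
    unfold dyckLevel1Rate
    rw [if_pos (by norm_num : (0:ℝ) ≤ 1/2)]
    simp [← hmdef]
  have hI1 : dyckLevel1Rate M 1 = Real.log (m + 1) - Real.log m := by
    unfold dyckLevel1Rate
    rw [if_neg (by norm_num : ¬ (1:ℝ) ≤ 1/2)]
    simp [← hmdef]
  -- combined nonnegativity + zero set
  have hkey : ∀ t ∈ Set.Icc (0:ℝ) 1,
      0 ≤ dyckLevel1Rate M t ∧ (dyckLevel1Rate M t = 0 ↔ t = p ∨ t = q) := by
    rintro t ⟨ht0, ht1⟩
    rcases eq_or_lt_of_le ht0 with h0 | h0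
    · subst h0
      rw [hI0]
      constructor
      · linarith
      · constructor
        · intro h; linarith
        · rintro (h | h)
          · exact absurd h.symm hp0.ne'
          · exact absurd h.symm hq0.ne'
    rcases eq_or_lt_of_le ht1 with h1 | h1
    · subst h1
      rw [hI1]
      constructor
      · linarith
      · constructor
        · intro h; linarith
        · rintro (h | h)
          · exact absurd h (by linarith)
          · exact absurd h (by linarith)
    rcases le_or_gt t (1 / 2) with hc | hc
    · rw [hI_le t hc]
      constructor
      · linarith [gibbs_le hp0 hp1 h0 h1]
      · constructor
        · intro h
          left
          by_contra hne
          have := gibbs_lt hp0 hp1 h0 h1 hne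
          linarith
        · rintro (h | h)
          · subst h; ring
          · exact absurd h (by linarith)
    · rw [hI_gt t (not_le.mpr hc)]
      constructor
      · linarith [gibbs_le hq0 hq1 h0 h1]
      · constructor
        · intro h
          right
          by_contra hne
          have := gibbs_lt hq0 hq1 h0 h1 hne
          linarith
        · rintro (h | h)
          · exact absurd h (by linarith)
          · subst h; ring
  refine ⟨?_, fun t ht => (hkey t ht).1, fun t ht => (hkey t ht).2, ?_⟩
  · rw [rate_eq]
    exact ((Real.continuous_mul_log.add
      (Real.continuous_mul_log.comp (continuous_const.sub continuous_id))).add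
        continuous_const).sub
      ((continuous_id.max (continuous_const.sub continuous_id)).mul
        continuous_const) |>.continuousOn
  · intro hD
    rw [rate_eq] at hD
    have hg : DifferentiableAt ℝ
        (fun t : ℝ => t * Real.log t + (1 - t) * Real.log (1 - t) + Real.log (m + 1))
        (1 / 2) := by
      have h1 : DifferentiableAt ℝ (fun t : ℝ => t * Real.log t) (1 / 2) :=
        differentiableAt_fun_id.mul (Real.differentiableAt_log (by norm_num))
      have hs : DifferentiableAt ℝ (fun t : ℝ => 1 - t) (1 / 2) :=
        (differentiableAt_const 1).sub differentiableAt_fun_id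
      have hxl : DifferentiableAt ℝ (fun x : ℝ => x * Real.log x) ((fun t : ℝ => 1 - t) (1/2)) := by
        have hpt : ((fun t : ℝ => 1 - t) (1/2) : ℝ) = 1/2 := by norm_num
        rw [hpt]
        exact differentiableAt_fun_id.mul (Real.differentiableAt_log (by norm_num))
      have h2 : DifferentiableAt ℝ (fun t : ℝ => (1 - t) * Real.log (1 - t)) (1 / 2) := by
        have := hxl.comp (1/2 : ℝ) hs
        exact this
      exact (h1.add h2).add (differentiableAt_const _)
    rw [← hmdef] at hD
    have hmax : DifferentiableAt ℝ (fun t : ℝ => max t (1 - t) * Real.log m) (1 / 2) := by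
      have h := hg.sub hD
      have heq : (fun t : ℝ =>
          (t * Real.log t + (1 - t) * Real.log (1 - t) + Real.log (m + 1)) -
          (t * Real.log t + (1 - t) * Real.log (1 - t) + Real.log (m + 1) -
            max t (1 - t) * Real.log m)) = fun t : ℝ => max t (1 - t) * Real.log m :=
        funext fun t => by ring
      rw [← heq]; exact h
    have habs : DifferentiableAt ℝ (fun t : ℝ => |2 * t - 1|) (1 / 2) := by
      have h := ((hmax.div_const (Real.log m)).const_mul (2 : ℝ)).sub_const 1
      have heq : (fun t : ℝ => 2 * (max t (1 - t) * Real.log m / Real.log m) - 1) =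
          fun t : ℝ => |2 * t - 1| := by
        funext t
        rw [mul_div_assoc, div_self hlogm.ne', mul_one]
        rcases le_total t (1 - t) with h' | h'
        · rw [max_eq_right h', abs_of_nonpos (by linarith)]; ring
        · rw [max_eq_left h', abs_of_nonneg (by linarith)]
      rwa [heq] at h
    have haff : DifferentiableAt ℝ (fun s : ℝ => (s + 1) / 2) 0 := by fun_prop
    have habs' : DifferentiableAt ℝ (fun t : ℝ => |2 * t - 1|) ((fun s : ℝ => (s + 1) / 2) 0) := by
      have hpt : ((fun s : ℝ => (s + 1) / 2) 0 : ℝ) = 1/2 := by norm_num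
      rw [hpt]
      exact habs
    have hcomp := habs'.comp 0 haff
    have heq2 : ((fun t : ℝ => |2 * t - 1|) ∘ (fun s : ℝ => (s + 1) / 2)) =
        fun s : ℝ => |s| := by
      funext s
      simp only [Function.comp]
      congr 1
      ring
    rw [heq2] at hcomp
    exact not_differentiableAt_abs_zero hcomp
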